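/- Let G be a group with a Λ-valued length function L such that c(g,h) ∈ Λ for all g, h ∈ G. On the set T(G) of pairs ⟨n,g⟩ with g ∈ G and n ∈ [0, L(g)]_Λ, modulo the identification ⟨n,g⟩ ~ ⟨n,h⟩ whenever n ≤ c(g,h), the function d(⟨n,g⟩, ⟨m,h⟩) = n + m − 2·min{n, m, c(g,h)} is well-defined and is a Λ-metric. -/

import Mathlib

section TofG

variable {Λ : Type*} [AddCommGroup Λ] [LinearOrder Λ] [IsOrderedAddMonoid Λ] {G : Type*} [Group G]

/-- A point `⟨n, g⟩` of the disjoint union of intervals `[0, L g]_Λ`. -/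
def TValid (L : G → Λ) (p : Λ × G) : Prop := 0 ≤ p.1 ∧ p.1 ≤ L p.2

/-- The identification `⟨n, g⟩ ~ ⟨m, h⟩` iff `n = m` and `n ≤ c(g, h)`. -/
def TRel (c : G → G → Λ) (p q : Λ × G) : Prop :=
  p.1 = q.1 ∧ p.1 ≤ c p.2 q.2

/-- The distance `d(⟨n,g⟩, ⟨m,h⟩) = n + m - 2 min {n, m, c(g,h)}`. -/
def TDist (c : G → G → Λ) (p q : Λ × G) : Λ :=
  p.1 + q.1 - (min p.1 (min q.1 (c p.2 q.2)) + min p.1 (min q.1 (c p.2 q.2)))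

end TofG

private lemma add_self_inj' {Λ : Type*} [AddCommGroup Λ] [LinearOrder Λ] [IsOrderedAddMonoid Λ] {x y : Λ}
    (h : x + x = y + y) : x = y := by
  rcases lt_trichotomy x y with h' | h' | h'
  · exact absurd h (ne_of_lt (add_lt_add h' h'))
  · exact h'
  · exact absurd h (ne_of_gt (add_lt_add h' h'))

/-- For a group `G` with `Λ`-valued length function `L` such
that `c(g,h) = (1/2)(L g + L h - L (g⁻¹ h)) ∈ Λ` for all `g, h`, the function
`d(⟨n,g⟩, ⟨m,h⟩) = n + m - 2 min {n, m, c(g,h)}` on the set of pairs `⟨n,g⟩`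
with `n ∈ [0, L g]_Λ` is well defined modulo the identification
`⟨n,g⟩ ~ ⟨n,h⟩` for `n ≤ c(g,h)`, and is a `Λ`-metric on the quotient. -/
theorem stmt_11 {Λ : Type*} [AddCommGroup Λ] [LinearOrder Λ] [IsOrderedAddMonoid Λ]
    {G : Type*} [Group G] (L : G → Λ) (c : G → G → Λ)
    (hc : ∀ g h, c g h + c g h = L g + L h - L (g⁻¹ * h))
    (h1 : ∀ g, L g = 0 ↔ g = 1)
    (h2 : ∀ g : G, L g⁻¹ = L g)
    (h3 : ∀ g h k : G, min (c g k) (c h k) ≤ c g h) :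
    (∀ p p' q q' : Λ × G, TValid L p → TValid L p' → TValid L q → TValid L q' →
      TRel c p p' → TRel c q q' → TDist c p q = TDist c p' q') ∧
    (∀ p q : Λ × G, TValid L p → TValid L q → 0 ≤ TDist c p q) ∧
    (∀ p q : Λ × G, TValid L p → TValid L q → (TDist c p q = 0 ↔ TRel c p q)) ∧
    (∀ p q : Λ × G, TValid L p → TValid L q → TDist c p q = TDist c q p) ∧
    (∀ p q r : Λ × G, TValid L p → TValid L q → TValid L r →
      TDist c p q ≤ TDist c p r + TDist c r q) := by

  have hL1 : L 1 = 0 := (h1 1).2 rfl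
  have hsym : ∀ g h : G, c g h = c h g := by
    intro g h
    apply add_self_inj'
    rw [hc, hc]
    have : L (h⁻¹ * g) = L (g⁻¹ * h) := by
      rw [← h2 (h⁻¹ * g)]; congr 1; simp [mul_inv_rev]
    rw [this]; abel
  -- the key swap lemma for well-definedness
  have hswap : ∀ (x : Λ) (g g' h : G), x ≤ c g g' → min x (c g h) = min x (c g' h) := by
    have key : ∀ (x : Λ) (g g' h : G), x ≤ c g g' → min x (c g h) ≤ c g' h := by
      intro x g g' h hx
      have h3' := h3 g' h g
      refine le_trans (le_min ?_ ?_) h3'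
      · exact le_trans (min_le_left _ _) (by rwa [← hsym g g'])
      · exact le_trans (min_le_right _ _) (le_of_eq (hsym g h))
    intro x g g' h hx
    apply le_antisymm
    · exact le_min (min_le_left _ _) (key x g g' h hx)
    · exact le_min (min_le_left _ _) (key x g' g h (by rwa [← hsym g g']))
  refine ⟨?_, ?_, ?_, ?_, ?_⟩
  · -- well-definedness
    rintro p p' q q' _ _ _ _ ⟨hp1, hp2⟩ ⟨hq1, hq2⟩
    unfold TDist
    rw [← hp1, ← hq1]
    congr 2 <;>
    · rw [← min_assoc, ← min_assoc]
      have e1 : min (min p.1 q.1) (c p.2 q.2) = min (min p.1 q.1) (c p'.2 q.2) :=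
        hswap _ _ _ _ (le_trans (min_le_left _ _) hp2)
      have e2 : min (min p.1 q.1) (c q.2 p'.2) = min (min p.1 q.1) (c q'.2 p'.2) :=
        hswap _ _ _ _ (le_trans (min_le_right _ _) hq2)
      rw [e1, hsym p'.2 q.2, e2, hsym q'.2 p'.2]
  · -- nonnegativity
    intro p q _ _
    unfold TDist
    have a : min p.1 (min q.1 (c p.2 q.2)) ≤ p.1 := min_le_left _ _
    have b : min p.1 (min q.1 (c p.2 q.2)) ≤ q.1 :=
      le_trans (min_le_right _ _) (min_le_left _ _)
    have := add_le_add a b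
    exact sub_nonneg.2 this
  · -- zero iff rel
    intro p q _ _
    unfold TDist
    set m := min p.1 (min q.1 (c p.2 q.2)) with hm
    have a : m ≤ p.1 := min_le_left _ _
    have b : m ≤ q.1 := le_trans (min_le_right _ _) (min_le_left _ _)
    have hmc : m ≤ c p.2 q.2 := le_trans (min_le_right _ _) (min_le_right _ _)
    constructor
    · intro h
      have e : p.1 + q.1 = m + m := sub_eq_zero.mp h
      have hp : p.1 ≤ m := by
        have : p.1 + q.1 ≤ p.1 + m → q.1 ≤ m := fun h => le_of_add_le_add_left h
        have h' : m + m ≤ m + q.1 := add_le_add_right b m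
        -- p.1 + q.1 = m + m ≤ m + q.1, so p.1 ≤ m
        have : p.1 + q.1 ≤ m + q.1 := e ▸ add_le_add_right b m
        exact le_of_add_le_add_right this
      have hq : q.1 ≤ m := by
        have : p.1 + q.1 ≤ p.1 + m := by
          calc p.1 + q.1 = m + m := e
            _ ≤ p.1 + m := add_le_add_left a m
        exact le_of_add_le_add_left this
      have hp' : p.1 = m := le_antisymm hp a
      have hq' : q.1 = m := le_antisymm hq b
      exact ⟨hp'.trans hq'.symm, hp' ▸ hmc⟩
    · rintro ⟨e, hle⟩
      have : m = p.1 := by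
        rw [hm, ← e, ← min_assoc, min_self, min_eq_left hle]
      rw [this, ← e, sub_self]
  · -- symmetry
    intro p q _ _
    unfold TDist
    rw [hsym p.2 q.2, min_left_comm, add_comm p.1 q.1]
  · -- triangle
    intro p q r _ _ _
    unfold TDist
    set mpq := min p.1 (min q.1 (c p.2 q.2)) with hmpq
    set mpr := min p.1 (min r.1 (c p.2 r.2)) with hmpr
    set mrq := min r.1 (min q.1 (c r.2 q.2)) with hmrq
    have hprp : mpr ≤ p.1 := min_le_left _ _
    have hprr : mpr ≤ r.1 := le_trans (min_le_right _ _) (min_le_left _ _)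
    have hprc : mpr ≤ c p.2 r.2 := le_trans (min_le_right _ _) (min_le_right _ _)
    have hrqr : mrq ≤ r.1 := min_le_left _ _
    have hrqq : mrq ≤ q.1 := le_trans (min_le_right _ _) (min_le_left _ _)
    have hrqc : mrq ≤ c r.2 q.2 := le_trans (min_le_right _ _) (min_le_right _ _)
    have h3' := h3 p.2 q.2 r.2
    have key : mpr + mrq ≤ r.1 + mpq := by
      rcases le_total mpr mrq with hle | hle
      · have : mpr ≤ mpq := by
          refine le_min hprp (le_min (le_trans hle hrqq) ?_)
          refine le_trans (le_min hprc ?_) h3'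
          exact le_trans hle (hrqc.trans (le_of_eq (hsym r.2 q.2)))
        calc mpr + mrq ≤ mpq + r.1 := add_le_add this hrqr
          _ = r.1 + mpq := add_comm _ _
      · have : mrq ≤ mpq := by
          refine le_min (le_trans hle hprp) (le_min hrqq ?_)
          refine le_trans (le_min ?_ ?_) h3'
          · exact le_trans hle hprc
          · exact hrqc.trans (le_of_eq (hsym r.2 q.2))
        exact add_le_add hprr this
    have key2 : mpr + mpr + (mrq + mrq) ≤ r.1 + r.1 + (mpq + mpq) := by
      have := add_le_add key key
      calc mpr + mpr + (mrq + mrq) = mpr + mrq + (mpr + mrq) := by abel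
        _ ≤ r.1 + mpq + (r.1 + mpq) := this
        _ = r.1 + r.1 + (mpq + mpq) := by abel
    have e1 : p.1 + r.1 - (mpr + mpr) + (r.1 + q.1 - (mrq + mrq))
        = p.1 + q.1 + (r.1 + r.1) - (mpr + mpr + (mrq + mrq)) := by abel
    have e2 : p.1 + q.1 - (mpq + mpq)
        = p.1 + q.1 + (r.1 + r.1) - (r.1 + r.1 + (mpq + mpq)) := by abel
    rw [e1, e2]
    exact sub_le_sub_left key2 _
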